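/- For n ≥ 2, 1 ≤ q < n/(n-1), and f ∈ L^1(R^n), define A_1(x) = |x|^{-n} ∫_{|y| < |x|/2} |y| |f(y)| dy. Then (∫_{R^n} A_1(x)^q |x|^{n(q-1)-q} dx)^{1/q} ≤ c(n,q) ‖f‖_{L^1}. -/

import Mathlib

open MeasureTheory Set ENNReal


lemma stmt4_tail (n : ℕ) (hn : 1 ≤ n) : ∃ M : ℝ, 0 ≤ M ∧ ∀ R : ℝ, 0 < R →
    (∫⁻ x : EuclideanSpace ℝ (Fin n), if 2 * R < ‖x‖ then ENNReal.ofReal (‖x‖ ^ (-(n:ℝ) - 1)) else 0)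
      ≤ ENNReal.ofReal (M / R) := by
  set G : (EuclideanSpace ℝ (Fin n)) → ℝ≥0∞ := fun x => if 2 < ‖x‖ then ENNReal.ofReal (‖x‖ ^ (-(n:ℝ) - 1)) else 0
    with hGdef
  have hGmeas : Measurable G := by
    apply Measurable.ite
    · exact measurableSet_lt measurable_const measurable_norm
    · fun_prop
    · fun_prop
  set T0 : ℝ≥0∞ := ∫⁻ x : EuclideanSpace ℝ (Fin n), G x with hT0
  have hT0top : T0 ≠ ⊤ := by
    have hbound : ∀ x : EuclideanSpace ℝ (Fin n), G x ≤
        ENNReal.ofReal ((2:ℝ) ^ ((n:ℝ)+1)) * ENNReal.ofReal ((1 + ‖x‖) ^ (-((n:ℝ)+1))) := by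
      intro x
      rw [hGdef]
      dsimp only
      split_ifs with hx
      · have h1 : (0:ℝ) < ‖x‖ := by linarith
        have h2 : (1:ℝ) + ‖x‖ ≤ 2 * ‖x‖ := by linarith
        rw [← ENNReal.ofReal_mul (by positivity)]
        apply ENNReal.ofReal_le_ofReal
        have e1 : ‖x‖ ^ (-(n:ℝ) - 1) = (‖x‖ ^ ((n:ℝ)+1))⁻¹ := by
          rw [← Real.rpow_neg h1.le]; ring_nf
        have e2 : (1 + ‖x‖) ^ (-((n:ℝ)+1)) = ((1 + ‖x‖) ^ ((n:ℝ)+1))⁻¹ := by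
          rw [← Real.rpow_neg (by positivity)]
        rw [e1, e2]
        have h3 : (1 + ‖x‖) ^ ((n:ℝ)+1) ≤ (2 * ‖x‖) ^ ((n:ℝ)+1) :=
          Real.rpow_le_rpow (by positivity) h2 (by positivity)
        have h4 : ((2:ℝ) * ‖x‖) ^ ((n:ℝ)+1) = 2 ^ ((n:ℝ)+1) * ‖x‖ ^ ((n:ℝ)+1) :=
          Real.mul_rpow (by norm_num) h1.le
        have h5 : (0:ℝ) < (1 + ‖x‖) ^ ((n:ℝ)+1) := Real.rpow_pos_of_pos (by positivity) _
        have h6 : (0:ℝ) < ‖x‖ ^ ((n:ℝ)+1) := Real.rpow_pos_of_pos h1 _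
        calc (‖x‖ ^ ((n:ℝ)+1))⁻¹ = 2 ^ ((n:ℝ)+1) * (2 ^ ((n:ℝ)+1) * ‖x‖ ^ ((n:ℝ)+1))⁻¹ := by
              rw [mul_inv]
              field_simp
          _ ≤ 2 ^ ((n:ℝ)+1) * ((1 + ‖x‖) ^ ((n:ℝ)+1))⁻¹ := by
              apply mul_le_mul_of_nonneg_left _ (by positivity)
              apply inv_anti₀ h5
              rw [← h4]; exact h3
      · exact zero_le
    have hfin : (∫⁻ x : EuclideanSpace ℝ (Fin n), ENNReal.ofReal ((1 + ‖x‖) ^ (-((n:ℝ)+1)))) < ⊤ := by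
      apply finite_integral_one_add_norm
      rw [finrank_euclideanSpace_fin]
      linarith
    have hle : T0 ≤ ENNReal.ofReal ((2:ℝ) ^ ((n:ℝ)+1)) *
        ∫⁻ x : EuclideanSpace ℝ (Fin n), ENNReal.ofReal ((1 + ‖x‖) ^ (-((n:ℝ)+1))) := by
      calc T0 ≤ ∫⁻ x : EuclideanSpace ℝ (Fin n), ENNReal.ofReal ((2:ℝ) ^ ((n:ℝ)+1)) *
            ENNReal.ofReal ((1 + ‖x‖) ^ (-((n:ℝ)+1))) := lintegral_mono hbound
        _ = _ := lintegral_const_mul' _ _ ENNReal.ofReal_ne_top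
    exact (lt_of_le_of_lt hle (ENNReal.mul_lt_top ENNReal.ofReal_lt_top hfin)).ne
  refine ⟨T0.toReal, ENNReal.toReal_nonneg, ?_⟩
  intro R hR
  have hRne : R ≠ 0 := hR.ne'
  have key : ∀ x : EuclideanSpace ℝ (Fin n), (if 2 * R < ‖x‖ then ENNReal.ofReal (‖x‖ ^ (-(n:ℝ) - 1)) else 0)
      = ENNReal.ofReal (R ^ (-(n:ℝ) - 1)) * G (R⁻¹ • x) := by
    intro x
    have hnorm : ‖R⁻¹ • x‖ = R⁻¹ * ‖x‖ := by
      rw [norm_smul, Real.norm_eq_abs, abs_of_pos (by positivity)]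
    rw [hGdef]
    dsimp only
    rw [hnorm]
    have hiff : (2 * R < ‖x‖) ↔ (2 < R⁻¹ * ‖x‖) := by
      rw [inv_mul_eq_div, lt_div_iff₀ hR]
    rw [← if_congr hiff rfl rfl]
    split_ifs with h
    · rw [← ENNReal.ofReal_mul (by positivity)]
      congr 1
      have h0x : (0:ℝ) < ‖x‖ := by nlinarith
      rw [Real.mul_rpow (by positivity) h0x.le, Real.inv_rpow hR.le, ← Real.rpow_neg hR.le,
        ← mul_assoc, ← Real.rpow_add hR]
      ring_nf
      rw [Real.rpow_zero, mul_one]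
    · rw [mul_zero]
  have hcomp : (∫⁻ x : EuclideanSpace ℝ (Fin n), G (R⁻¹ • x)) = ENNReal.ofReal (R ^ n) * T0 := by
    have hmeas : Measurable fun x : EuclideanSpace ℝ (Fin n) => R⁻¹ • x := measurable_id.const_smul R⁻¹
    rw [hT0, ← lintegral_map hGmeas hmeas, MeasureTheory.Measure.map_addHaar_smul volume
      (inv_ne_zero hRne), lintegral_smul_measure, finrank_euclideanSpace_fin]
    congr 1
    rw [inv_pow, inv_inv, abs_of_pos (by positivity)]
  calc (∫⁻ x : EuclideanSpace ℝ (Fin n), if 2 * R < ‖x‖ then ENNReal.ofReal (‖x‖ ^ (-(n:ℝ) - 1)) else 0)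
      = ENNReal.ofReal (R ^ (-(n:ℝ) - 1)) * ∫⁻ x : EuclideanSpace ℝ (Fin n), G (R⁻¹ • x) := by
        simp_rw [key]; exact lintegral_const_mul' _ _ ENNReal.ofReal_ne_top
    _ = ENNReal.ofReal (R ^ (-(n:ℝ) - 1)) * (ENNReal.ofReal (R ^ n) * T0) := by rw [hcomp]
    _ = ENNReal.ofReal (R⁻¹) * T0 := by
        rw [← mul_assoc, ← ENNReal.ofReal_mul (by positivity)]
        congr 2
        rw [← Real.rpow_natCast R n, ← Real.rpow_add hR]
        rw [show -(n:ℝ) - 1 + (n:ℝ) = -1 by ring, Real.rpow_neg_one]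
    _ = ENNReal.ofReal R⁻¹ * ENNReal.ofReal T0.toReal := by rw [ENNReal.ofReal_toReal hT0top]
    _ = ENNReal.ofReal (T0.toReal / R) := by
        rw [← ENNReal.ofReal_mul (by positivity), div_eq_mul_inv, mul_comm]
    _ ≤ ENNReal.ofReal (T0.toReal / R) := le_rfl
lemma stmt4_pointwise {q r I F : ℝ} (n : ℕ) (hn : 1 ≤ n) (hq1 : 1 ≤ q) (hr : 0 ≤ r)
    (hI0 : 0 ≤ I) (hIF : I ≤ r / 2 * F) (hF : 0 ≤ F) :
    (r ^ (-(n:ℝ)) * I) ^ q * r ^ ((n:ℝ) * (q - 1) - q) ≤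
      2 ^ (1 - q) * F ^ (q - 1) * (r ^ (-(n:ℝ) - 1) * I) := by
  have hq0 : q ≠ 0 := by linarith
  rcases eq_or_lt_of_le hr with h0 | hrpos
  · rw [← h0, show (0:ℝ) ^ (-(n:ℝ)) = 0 from Real.zero_rpow (by simp; omega), zero_mul,
      Real.zero_rpow hq0, zero_mul]
    positivity
  · have hB : I ^ q ≤ (r / 2 * F) ^ (q - 1) * I := by
      rcases eq_or_lt_of_le hI0 with hI | hI
      · rw [← hI, Real.zero_rpow hq0, mul_zero]
      · have hsplit : I ^ q = I ^ (q - 1) * I := by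
          calc I ^ q = I ^ (q - 1 + 1) := by norm_num
            _ = I ^ (q - 1) * I ^ (1:ℝ) := Real.rpow_add hI _ _
            _ = I ^ (q - 1) * I := by rw [Real.rpow_one]
        rw [hsplit]
        exact mul_le_mul_of_nonneg_right (Real.rpow_le_rpow hI0 hIF (by linarith)) hI0
    have e1 : (r ^ (-(n:ℝ))) ^ q = r ^ (-(n:ℝ) * q) := by rw [← Real.rpow_mul hr]
    have e2 : (r / 2 * F) ^ (q - 1) = r ^ (q - 1) * (2:ℝ) ^ (1 - q) * F ^ (q - 1) := by
      rw [Real.mul_rpow (by positivity) hF, Real.div_rpow hr (by norm_num), div_eq_mul_inv,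
        ← Real.rpow_neg (by norm_num : (0:ℝ) ≤ 2), show -(q-1) = 1 - q from by ring]
    have e3 : r ^ (-(n:ℝ) * q) * r ^ (q - 1) * r ^ ((n:ℝ) * (q - 1) - q) = r ^ (-(n:ℝ) - 1) := by
      rw [← Real.rpow_add hrpos, ← Real.rpow_add hrpos]
      congr 1
      ring
    calc (r ^ (-(n:ℝ)) * I) ^ q * r ^ ((n:ℝ) * (q - 1) - q)
        = (r ^ (-(n:ℝ))) ^ q * I ^ q * r ^ ((n:ℝ) * (q - 1) - q) := by
          rw [Real.mul_rpow (Real.rpow_nonneg hr _) hI0]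
      _ ≤ (r ^ (-(n:ℝ))) ^ q * ((r / 2 * F) ^ (q - 1) * I) * r ^ ((n:ℝ) * (q - 1) - q) :=
          mul_le_mul_of_nonneg_right
            (mul_le_mul_of_nonneg_left hB (Real.rpow_nonneg (Real.rpow_nonneg hr _) _))
            (Real.rpow_nonneg hr _)
      _ = 2 ^ (1 - q) * F ^ (q - 1) * (r ^ (-(n:ℝ) - 1) * I) := by
          rw [e1, e2, ← e3]
          ring
open MeasureTheory Set ENNReal

section Main
variable (n : ℕ)
local notation "E" => EuclideanSpace ℝ (Fin n)

theorem stmt_4' (hn : 2 ≤ n) (q : ℝ) (hq1 : 1 ≤ q) :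
    ∃ c : ℝ, 0 < c ∧ ∀ f : EuclideanSpace ℝ (Fin n) → ℝ, Integrable f →
      (∫⁻ x : EuclideanSpace ℝ (Fin n), ENNReal.ofReal
          ((‖x‖ ^ (-(n : ℝ)) * ∫ y in {y : EuclideanSpace ℝ (Fin n) | ‖y‖ < ‖x‖ / 2},
              ‖y‖ * |f y|) ^ q * ‖x‖ ^ (n * (q - 1) - q))) ^ (1 / q) ≤
        ENNReal.ofReal (c * ∫ y, |f y|) := by
  obtain ⟨M, hM0, hM⟩ := stmt4_tail n (by omega)
  have hq0 : q ≠ 0 := by linarith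
  refine ⟨((2:ℝ) ^ (1 - q) * M) ^ (1/q) + 1, by positivity, ?_⟩
  intro f hf
  set F : ℝ := ∫ y, |f y| with hFdef
  have hF0 : 0 ≤ F := integral_nonneg fun y => abs_nonneg _
  have hSmeas : ∀ r : ℝ, MeasurableSet {y : E | ‖y‖ < r} := fun r =>
    measurableSet_lt measurable_norm measurable_const
  -- integrability of the inner integrand
  have hIf : ∀ x : E, IntegrableOn (fun y => ‖y‖ * |f y|) {y : E | ‖y‖ < ‖x‖ / 2} := by
    intro x
    apply Integrable.mono' ((hf.abs.restrict).const_mul (‖x‖ / 2))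
      ((continuous_norm.aestronglyMeasurable.mul hf.abs.1).restrict)
    refine (ae_restrict_mem (hSmeas _)).mono fun y hy => ?_
    have hnn : (0:ℝ) ≤ ‖y‖ * |f y| := by positivity
    simp only [Pi.mul_apply]
    rw [Real.norm_of_nonneg hnn]
    exact mul_le_mul_of_nonneg_right (le_of_lt hy) (abs_nonneg _)
  set I : E → ℝ := fun x => ∫ y in {y : E | ‖y‖ < ‖x‖ / 2}, ‖y‖ * |f y| with hIdef
  have hI0 : ∀ x : E, 0 ≤ I x := fun x =>
    setIntegral_nonneg (hSmeas _) fun y _ => by positivity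
  have hIF : ∀ x : E, I x ≤ ‖x‖ / 2 * F := by
    intro x
    calc I x ≤ ∫ y in {y : E | ‖y‖ < ‖x‖ / 2}, ‖x‖ / 2 * |f y| :=
          setIntegral_mono_on (hIf x) ((hf.abs.restrict).const_mul _) (hSmeas _)
            fun y hy => mul_le_mul_of_nonneg_right (le_of_lt hy) (abs_nonneg _)
      _ = ‖x‖ / 2 * ∫ y in {y : E | ‖y‖ < ‖x‖ / 2}, |f y| := integral_const_mul _ _
      _ ≤ ‖x‖ / 2 * F := mul_le_mul_of_nonneg_left
          (setIntegral_le_integral hf.abs (ae_of_all _ fun y => abs_nonneg _)) (by positivity)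
  -- measurable representative
  have hfm := hf.aemeasurable
  set g : E → ℝ := hfm.mk f with hgdef
  have hg : Measurable g := hfm.measurable_mk
  have hfg : f =ᵐ[volume] g := hfm.ae_eq_mk
  have hC : ∀ x : E, ENNReal.ofReal (I x)
      = ∫⁻ y in {y : E | ‖y‖ < ‖x‖ / 2}, ENNReal.ofReal (‖y‖ * |g y|) := by
    intro x
    rw [hIdef]
    rw [ofReal_integral_eq_lintegral_ofReal (hIf x)
      (ae_of_all _ fun y => by positivity)]
    exact lintegral_congr_ae (ae_restrict_of_ae (hfg.mono fun y hy => by simp only [hy]))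
  -- the double-integral kernel
  set W : E × E → ℝ≥0∞ := fun p =>
    if ‖p.2‖ < ‖p.1‖ / 2 then
      ENNReal.ofReal (‖p.1‖ ^ (-(n:ℝ) - 1)) * ENNReal.ofReal (‖p.2‖ * |g p.2|) else 0
    with hWdef
  have hWmeas : Measurable W := by
    apply Measurable.ite
    · exact measurableSet_lt (measurable_norm.comp measurable_snd)
        ((measurable_norm.comp measurable_fst).div_const 2)
    · fun_prop
    · fun_prop
  -- main estimate on the full lintegral
  have H : (∫⁻ x : E, ENNReal.ofReal
      ((‖x‖ ^ (-(n : ℝ)) * I x) ^ q * ‖x‖ ^ (n * (q - 1) - q)))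
      ≤ ENNReal.ofReal ((2:ℝ) ^ (1 - q) * M * F ^ q) := by
    have step1 : (∫⁻ x : E, ENNReal.ofReal
        ((‖x‖ ^ (-(n : ℝ)) * I x) ^ q * ‖x‖ ^ (n * (q - 1) - q)))
        ≤ ENNReal.ofReal ((2:ℝ) ^ (1 - q) * F ^ (q - 1)) *
          ∫⁻ x : E, ENNReal.ofReal (‖x‖ ^ (-(n:ℝ) - 1)) * ENNReal.ofReal (I x) := by
      rw [← lintegral_const_mul' _ _ ENNReal.ofReal_ne_top]
      apply lintegral_mono fun x => ?_
      calc ENNReal.ofReal ((‖x‖ ^ (-(n : ℝ)) * I x) ^ q * ‖x‖ ^ (n * (q - 1) - q))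
          ≤ ENNReal.ofReal ((2:ℝ) ^ (1 - q) * F ^ (q - 1) * (‖x‖ ^ (-(n:ℝ) - 1) * I x)) :=
            ENNReal.ofReal_le_ofReal (stmt4_pointwise n (by omega) hq1 (norm_nonneg x)
              (hI0 x) (hIF x) hF0)
        _ = _ := by
            rw [ENNReal.ofReal_mul (by positivity),
              ENNReal.ofReal_mul (Real.rpow_nonneg (norm_nonneg x) _)]
    have step2 : (∫⁻ x : E, ENNReal.ofReal (‖x‖ ^ (-(n:ℝ) - 1)) * ENNReal.ofReal (I x))
        = ∫⁻ x : E, ∫⁻ y : E, W (x, y) := by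
      apply lintegral_congr fun x => ?_
      rw [hC x, ← lintegral_const_mul' _ _ ENNReal.ofReal_ne_top,
        ← lintegral_indicator (hSmeas _)]
      apply lintegral_congr fun y => ?_
      rw [hWdef]
      simp only [Set.indicator_apply, Set.mem_setOf_eq]
    have step3 : (∫⁻ x : E, ∫⁻ y : E, W (x, y)) = ∫⁻ y : E, ∫⁻ x : E, W (x, y) :=
      lintegral_lintegral_swap hWmeas.aemeasurable
    have step4 : (∫⁻ y : E, ∫⁻ x : E, W (x, y)) ≤ ENNReal.ofReal M * ENNReal.ofReal F := by
      haveI : Nonempty (Fin n) := ⟨⟨0, by omega⟩⟩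
      have hae : ∀ᵐ y : E ∂volume, y ≠ 0 := by
        rw [ae_iff]
        have : {y : E | ¬ y ≠ 0} = {(0:E)} := by ext y; simp
        rw [this]
        exact measure_singleton 0
      calc (∫⁻ y : E, ∫⁻ x : E, W (x, y))
          ≤ ∫⁻ y : E, ENNReal.ofReal (M * |g y|) := by
            apply lintegral_mono_ae (hae.mono fun y hy => ?_)
            have hynorm : (0:ℝ) < ‖y‖ := norm_pos_iff.mpr hy
            have hxint : (∫⁻ x : E, W (x, y))
                = (∫⁻ x : E, if 2 * ‖y‖ < ‖x‖ then ENNReal.ofReal (‖x‖ ^ (-(n:ℝ) - 1)) else 0)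
                  * ENNReal.ofReal (‖y‖ * |g y|) := by
              rw [← lintegral_mul_const' _ _ ENNReal.ofReal_ne_top]
              apply lintegral_congr fun x => ?_
              rw [hWdef]
              simp only [ite_mul, zero_mul]
              congr 1
              rw [eq_iff_iff]
              rw [lt_div_iff₀ (by norm_num : (0:ℝ) < 2), mul_comm]
            rw [hxint]
            calc (∫⁻ x : E, if 2 * ‖y‖ < ‖x‖ then ENNReal.ofReal (‖x‖ ^ (-(n:ℝ) - 1)) else 0)
                  * ENNReal.ofReal (‖y‖ * |g y|)
                ≤ ENNReal.ofReal (M / ‖y‖) * ENNReal.ofReal (‖y‖ * |g y|) :=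
                  mul_le_mul_left (hM ‖y‖ hynorm) _
              _ = ENNReal.ofReal (M * |g y|) := by
                  rw [← ENNReal.ofReal_mul (by positivity)]
                  congr 1
                  field_simp
        _ = ENNReal.ofReal M * ∫⁻ y : E, ENNReal.ofReal (|g y|) := by
            simp_rw [ENNReal.ofReal_mul hM0]
            exact lintegral_const_mul' _ _ ENNReal.ofReal_ne_top
        _ = ENNReal.ofReal M * ENNReal.ofReal F := by
            congr 1
            rw [show (∫⁻ y : E, ENNReal.ofReal (|g y|)) = ∫⁻ y : E, ENNReal.ofReal (|f y|) from
              lintegral_congr_ae (hfg.mono fun y hy => by simp only [hy]) |>.symm]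
            exact (ofReal_integral_eq_lintegral_ofReal hf.abs
              (ae_of_all _ fun y => abs_nonneg _)).symm
    have hFq : F ^ (q - 1) * F = F ^ q := by
      rcases eq_or_lt_of_le hF0 with h | h
      · rw [← h, mul_zero, Real.zero_rpow hq0]
      · calc F ^ (q - 1) * F = F ^ (q - 1) * F ^ (1:ℝ) := by rw [Real.rpow_one]
          _ = F ^ (q - 1 + 1) := (Real.rpow_add h _ _).symm
          _ = F ^ q := by norm_num
    calc (∫⁻ x : E, ENNReal.ofReal
          ((‖x‖ ^ (-(n : ℝ)) * I x) ^ q * ‖x‖ ^ (n * (q - 1) - q)))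
        ≤ ENNReal.ofReal ((2:ℝ) ^ (1 - q) * F ^ (q - 1)) *
          (ENNReal.ofReal M * ENNReal.ofReal F) := by
          rw [step2, step3] at step1
          exact le_trans step1 (mul_le_mul_right step4 _)
      _ = ENNReal.ofReal ((2:ℝ) ^ (1 - q) * M * F ^ q) := by
          rw [← ENNReal.ofReal_mul hM0, ← ENNReal.ofReal_mul (by positivity)]
          congr 1
          rw [← hFq]
          ring
  -- conclude
  calc (∫⁻ x : E, ENNReal.ofReal
        ((‖x‖ ^ (-(n : ℝ)) * I x) ^ q * ‖x‖ ^ (n * (q - 1) - q))) ^ (1/q)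
      ≤ (ENNReal.ofReal ((2:ℝ) ^ (1 - q) * M * F ^ q)) ^ (1/q) :=
        ENNReal.rpow_le_rpow H (by positivity)
    _ = ENNReal.ofReal (((2:ℝ) ^ (1 - q) * M * F ^ q) ^ (1/q)) :=
        ENNReal.ofReal_rpow_of_nonneg (by positivity) (by positivity)
    _ = ENNReal.ofReal (((2:ℝ) ^ (1 - q) * M) ^ (1/q) * F) := by
        congr 1
        rw [Real.mul_rpow (by positivity) (Real.rpow_nonneg hF0 _),
          ← Real.rpow_mul hF0, mul_one_div_cancel hq0, Real.rpow_one]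
    _ ≤ ENNReal.ofReal ((((2:ℝ) ^ (1 - q) * M) ^ (1/q) + 1) * F) :=
        ENNReal.ofReal_le_ofReal (mul_le_mul_of_nonneg_right (by linarith) hF0)

end Main

theorem stmt_4 (n : ℕ) (hn : 2 ≤ n) (q : ℝ) (hq1 : 1 ≤ q) (hq2 : q < n / (n - 1)) :
    ∃ c : ℝ, 0 < c ∧ ∀ f : EuclideanSpace ℝ (Fin n) → ℝ, Integrable f →
      (∫⁻ x : EuclideanSpace ℝ (Fin n), ENNReal.ofReal
          ((‖x‖ ^ (-(n : ℝ)) * ∫ y in {y : EuclideanSpace ℝ (Fin n) | ‖y‖ < ‖x‖ / 2},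
              ‖y‖ * |f y|) ^ q * ‖x‖ ^ (n * (q - 1) - q))) ^ (1 / q) ≤
        ENNReal.ofReal (c * ∫ y, |f y|) := stmt_4' n hn q hq1
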